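/- Let H, H', H'' be complex Hilbert spaces and let Z : H → H' and Z' : H' → H'' be continuous linear maps each admitting a parametrix. Then Z, Z' and Z'∘Z all have finite-dimensional kernel and cokernel, and the Fredholm index is additive: ind(Z'∘Z) = ind(Z) + ind(Z'), where ind(Z) = dim ker(Z) − dim(H'/range(Z)). -/

import Mathlib

/-- A continuous linear map is of finite rank if its range is finite dimensional. -/
def FiniteRank {V W : Type*} [NormedAddCommGroup V] [NormedSpace ℂ V]
    [NormedAddCommGroup W] [NormedSpace ℂ W] (T : V →L[ℂ] W) : Prop :=
  FiniteDimensional ℂ (LinearMap.range (T : V →ₗ[ℂ] W))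

/-- `Q` is a parametrix for `Z`: `Q∘Z - id` and `Z∘Q - id` are finite rank. -/
def IsParametrix {H H' : Type*} [NormedAddCommGroup H] [NormedSpace ℂ H]
    [NormedAddCommGroup H'] [NormedSpace ℂ H']
    (Z : H →L[ℂ] H') (Q : H' →L[ℂ] H) : Prop :=
  FiniteRank (Q.comp Z - ContinuousLinearMap.id ℂ H) ∧
    FiniteRank (Z.comp Q - ContinuousLinearMap.id ℂ H')

section Aux

variable {H H' H'' : Type*} [NormedAddCommGroup H] [NormedSpace ℂ H]
  [NormedAddCommGroup H'] [NormedSpace ℂ H']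
  [NormedAddCommGroup H''] [NormedSpace ℂ H'']

lemma finiteRank_comp_left (A : H' →L[ℂ] H'') {T : H →L[ℂ] H'} (h : FiniteRank T) :
    FiniteRank (A.comp T) := by
  haveI : FiniteDimensional ℂ (LinearMap.range (T : H →ₗ[ℂ] H')) := h
  have e : LinearMap.range ((A.comp T) : H →ₗ[ℂ] H'') =
      (LinearMap.range (T : H →ₗ[ℂ] H')).map (A : H' →ₗ[ℂ] H'') := by
    rw [ContinuousLinearMap.toLinearMap_comp, LinearMap.range_comp]
  show FiniteDimensional ℂ _
  rw [e]
  exact Module.Finite.map _ _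

lemma finiteRank_comp_right {T : H' →L[ℂ] H''} (B : H →L[ℂ] H') (h : FiniteRank T) :
    FiniteRank (T.comp B) := by
  haveI : FiniteDimensional ℂ (LinearMap.range (T : H' →ₗ[ℂ] H'')) := h
  have hle : LinearMap.range ((T.comp B) : H →ₗ[ℂ] H'') ≤
      LinearMap.range (T : H' →ₗ[ℂ] H'') := by
    rw [ContinuousLinearMap.toLinearMap_comp]
    exact LinearMap.range_comp_le_range _ _
  exact Submodule.finiteDimensional_of_le hle

lemma finiteRank_add {T S : H →L[ℂ] H'} (hT : FiniteRank T) (hS : FiniteRank S) :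
    FiniteRank (T + S) := by
  haveI : FiniteDimensional ℂ (LinearMap.range (T : H →ₗ[ℂ] H')) := hT
  haveI : FiniteDimensional ℂ (LinearMap.range (S : H →ₗ[ℂ] H')) := hS
  have hle : LinearMap.range ((T + S) : H →ₗ[ℂ] H') ≤
      LinearMap.range (T : H →ₗ[ℂ] H') ⊔ LinearMap.range (S : H →ₗ[ℂ] H') := by
    rintro _ ⟨x, rfl⟩
    exact Submodule.add_mem_sup (LinearMap.mem_range_self _ x) (LinearMap.mem_range_self _ x)
  exact Submodule.finiteDimensional_of_le hle

lemma ker_fd (Z : H →L[ℂ] H') (Q : H' →L[ℂ] H)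
    (h : FiniteRank (Q.comp Z - ContinuousLinearMap.id ℂ H)) :
    FiniteDimensional ℂ (LinearMap.ker (Z : H →ₗ[ℂ] H')) := by
  haveI : FiniteDimensional ℂ
      (LinearMap.range ((Q.comp Z - ContinuousLinearMap.id ℂ H) : H →ₗ[ℂ] H)) := h
  have hle : LinearMap.ker (Z : H →ₗ[ℂ] H') ≤
      LinearMap.range ((Q.comp Z - ContinuousLinearMap.id ℂ H) : H →ₗ[ℂ] H) := by
    intro x hx
    have hx' : Z x = 0 := hx
    exact ⟨-x, by simp [hx']⟩
  exact Submodule.finiteDimensional_of_le hle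

lemma coker_fd (Z : H →L[ℂ] H') (Q : H' →L[ℂ] H)
    (h : FiniteRank (Z.comp Q - ContinuousLinearMap.id ℂ H')) :
    FiniteDimensional ℂ (H' ⧸ LinearMap.range (Z : H →ₗ[ℂ] H')) := by
  set S := Z.comp Q - ContinuousLinearMap.id ℂ H' with hS
  haveI : FiniteDimensional ℂ (LinearMap.range (S : H' →ₗ[ℂ] H')) := h
  let φ : LinearMap.range (S : H' →ₗ[ℂ] H') →ₗ[ℂ] H' ⧸ LinearMap.range (Z : H →ₗ[ℂ] H') :=
    (LinearMap.range (Z : H →ₗ[ℂ] H')).mkQ.comp (LinearMap.range (S : H' →ₗ[ℂ] H')).subtype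
  have hsurj : Function.Surjective φ := by
    intro q
    obtain ⟨y, rfl⟩ := Submodule.Quotient.mk_surjective _ q
    refine ⟨⟨S (-y), LinearMap.mem_range_self _ _⟩, ?_⟩
    show Submodule.Quotient.mk (S (-y)) = Submodule.Quotient.mk y
    rw [Submodule.Quotient.eq]
    refine ⟨Q (-y), ?_⟩
    simp [hS]
  exact Module.Finite.of_surjective φ hsurj

end Aux

theorem stmt4 {H H' H'' : Type*}
    [NormedAddCommGroup H] [InnerProductSpace ℂ H] [CompleteSpace H]
    [NormedAddCommGroup H'] [InnerProductSpace ℂ H'] [CompleteSpace H']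
    [NormedAddCommGroup H''] [InnerProductSpace ℂ H''] [CompleteSpace H'']
    (Z : H →L[ℂ] H') (Z' : H' →L[ℂ] H'')
    (hZ : ∃ Q : H' →L[ℂ] H, IsParametrix Z Q)
    (hZ' : ∃ Q' : H'' →L[ℂ] H', IsParametrix Z' Q') :
    FiniteDimensional ℂ (LinearMap.ker (Z : H →ₗ[ℂ] H')) ∧
    FiniteDimensional ℂ (H' ⧸ LinearMap.range (Z : H →ₗ[ℂ] H')) ∧
    FiniteDimensional ℂ (LinearMap.ker (Z' : H' →ₗ[ℂ] H'')) ∧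
    FiniteDimensional ℂ (H'' ⧸ LinearMap.range (Z' : H' →ₗ[ℂ] H'')) ∧
    FiniteDimensional ℂ (LinearMap.ker (Z'.comp Z : H →ₗ[ℂ] H'')) ∧
    FiniteDimensional ℂ (H'' ⧸ LinearMap.range (Z'.comp Z : H →ₗ[ℂ] H'')) ∧
    (Module.finrank ℂ (LinearMap.ker (Z'.comp Z : H →ₗ[ℂ] H'')) : ℤ) -
        (Module.finrank ℂ (H'' ⧸ LinearMap.range (Z'.comp Z : H →ₗ[ℂ] H'')) : ℤ) =
      ((Module.finrank ℂ (LinearMap.ker (Z : H →ₗ[ℂ] H')) : ℤ) -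
          (Module.finrank ℂ (H' ⧸ LinearMap.range (Z : H →ₗ[ℂ] H')) : ℤ)) +
        ((Module.finrank ℂ (LinearMap.ker (Z' : H' →ₗ[ℂ] H'')) : ℤ) -
          (Module.finrank ℂ (H'' ⧸ LinearMap.range (Z' : H' →ₗ[ℂ] H'')) : ℤ)) := by
  obtain ⟨Q, hQ1, hQ2⟩ := hZ
  obtain ⟨Q', hQ'1, hQ'2⟩ := hZ'
  -- parametrix for the composite
  have e1 : (Q.comp Q').comp (Z'.comp Z) - ContinuousLinearMap.id ℂ H =
      Q.comp ((Q'.comp Z' - ContinuousLinearMap.id ℂ H').comp Z) +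
        (Q.comp Z - ContinuousLinearMap.id ℂ H) := by
    ext x; simp
  have e2 : (Z'.comp Z).comp (Q.comp Q') - ContinuousLinearMap.id ℂ H'' =
      Z'.comp ((Z.comp Q - ContinuousLinearMap.id ℂ H').comp Q') +
        (Z'.comp Q' - ContinuousLinearMap.id ℂ H'') := by
    ext x; simp
  have hC1 : FiniteRank ((Q.comp Q').comp (Z'.comp Z) - ContinuousLinearMap.id ℂ H) := by
    rw [e1]
    exact finiteRank_add (finiteRank_comp_left _ (finiteRank_comp_right _ hQ'1)) hQ1
  have hC2 : FiniteRank ((Z'.comp Z).comp (Q.comp Q') - ContinuousLinearMap.id ℂ H'') := by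
    rw [e2]
    exact finiteRank_add (finiteRank_comp_left _ (finiteRank_comp_right _ hQ2)) hQ'2
  haveI fA : FiniteDimensional ℂ (LinearMap.ker (Z : H →ₗ[ℂ] H')) := ker_fd Z Q hQ1
  haveI fD : FiniteDimensional ℂ (H' ⧸ LinearMap.range (Z : H →ₗ[ℂ] H')) := coker_fd Z Q hQ2
  haveI fC : FiniteDimensional ℂ (LinearMap.ker (Z' : H' →ₗ[ℂ] H'')) := ker_fd Z' Q' hQ'1
  haveI fF : FiniteDimensional ℂ (H'' ⧸ LinearMap.range (Z' : H' →ₗ[ℂ] H'')) :=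
    coker_fd Z' Q' hQ'2
  haveI fB : FiniteDimensional ℂ (LinearMap.ker (Z'.comp Z : H →ₗ[ℂ] H'')) :=
    ker_fd (Z'.comp Z) (Q.comp Q') hC1
  haveI fE : FiniteDimensional ℂ (H'' ⧸ LinearMap.range (Z'.comp Z : H →ₗ[ℂ] H'')) :=
    coker_fd (Z'.comp Z) (Q.comp Q') hC2
  refine ⟨fA, fD, fC, fF, fB, fE, ?_⟩
  -- index additivity via the six-term exact sequence
  set Zl : H →ₗ[ℂ] H' := (Z : H →ₗ[ℂ] H') with hZl
  set Z'l : H' →ₗ[ℂ] H'' := (Z' : H' →ₗ[ℂ] H'') with hZ'l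
  set Cl : H →ₗ[ℂ] H'' := ((Z'.comp Z : H →L[ℂ] H'') : H →ₗ[ℂ] H'') with hCl
  have hClc : ∀ x, Cl x = Z'l (Zl x) := fun x => rfl
  -- the maps
  let f : LinearMap.ker Zl →ₗ[ℂ] LinearMap.ker Cl :=
    LinearMap.codRestrict _ (Submodule.subtype _) (by
      rintro ⟨x, hx⟩
      have : Zl x = 0 := hx
      simp only [LinearMap.mem_ker, Submodule.subtype_apply, hClc, this, map_zero])
  let g : LinearMap.ker Cl →ₗ[ℂ] LinearMap.ker Z'l :=
    LinearMap.codRestrict _ (Zl.comp (Submodule.subtype _)) (by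
      rintro ⟨x, hx⟩
      have : Cl x = 0 := hx
      simpa [LinearMap.mem_ker, hClc] using this)
  let h3 : LinearMap.ker Z'l →ₗ[ℂ] (H' ⧸ LinearMap.range Zl) :=
    (LinearMap.range Zl).mkQ.comp (Submodule.subtype _)
  let k : (H' ⧸ LinearMap.range Zl) →ₗ[ℂ] (H'' ⧸ LinearMap.range Cl) :=
    Submodule.mapQ _ _ Z'l (by
      rintro _ ⟨x, rfl⟩
      exact ⟨x, (hClc x).symm⟩)
  let l : (H'' ⧸ LinearMap.range Cl) →ₗ[ℂ] (H'' ⧸ LinearMap.range Z'l) :=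
    Submodule.mapQ _ _ LinearMap.id (by
      rintro _ ⟨x, rfl⟩
      exact ⟨Zl x, (hClc x).symm⟩)
  -- exactness facts
  have hf_inj : Function.Injective f := by
    intro a b hab
    rw [Subtype.ext_iff] at hab ⊢
    exact hab
  have hfg : LinearMap.range f = LinearMap.ker g := by
    ext ⟨x, hx⟩
    constructor
    · rintro ⟨⟨a, ha⟩, hfa⟩
      have hax : a = x := congrArg Subtype.val hfa
      refine Subtype.ext ?_
      show Zl x = 0
      rw [← hax]; exact ha
    · intro hgx
      have : Zl x = 0 := congrArg Subtype.val hgx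
      exact ⟨⟨x, this⟩, rfl⟩
  have hgh : LinearMap.range g = LinearMap.ker h3 := by
    ext ⟨y, hy⟩
    constructor
    · rintro ⟨⟨x, hx⟩, hgx⟩
      have hxy : Zl x = y := congrArg Subtype.val hgx
      show Submodule.Quotient.mk y = 0
      rw [← hxy, Submodule.Quotient.mk_eq_zero]
      exact ⟨x, rfl⟩
    · intro hky
      have : Submodule.Quotient.mk y = (0 : H' ⧸ LinearMap.range Zl) := hky
      rw [Submodule.Quotient.mk_eq_zero] at this
      obtain ⟨x, hx⟩ := this
      have hxk : Cl x = 0 := by rw [hClc, hx]; exact hy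
      exact ⟨⟨x, hxk⟩, Subtype.ext hx⟩
  have hhk : LinearMap.range h3 = LinearMap.ker k := by
    ext q
    obtain ⟨y, rfl⟩ := Submodule.Quotient.mk_surjective _ q
    constructor
    · rintro ⟨⟨c, hc⟩, hcy⟩
      have hcy' : Submodule.Quotient.mk c = (Submodule.Quotient.mk y : H' ⧸ LinearMap.range Zl) := hcy
      rw [LinearMap.mem_ker, ← hcy']
      show Submodule.Quotient.mk (Z'l c) = 0
      rw [Submodule.Quotient.mk_eq_zero, hc]
      exact Submodule.zero_mem _
    · intro hky
      have : Submodule.Quotient.mk (Z'l y) = (0 : H'' ⧸ LinearMap.range Cl) := hky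
      rw [Submodule.Quotient.mk_eq_zero] at this
      obtain ⟨x, hx⟩ := this
      have hker : Z'l (y - Zl x) = 0 := by
        rw [map_sub, ← hClc, hx, sub_self]
      refine ⟨⟨y - Zl x, hker⟩, ?_⟩
      show Submodule.Quotient.mk (y - Zl x) = Submodule.Quotient.mk y
      rw [Submodule.Quotient.eq]
      exact ⟨-x, by simp⟩
  have hkl : LinearMap.range k = LinearMap.ker l := by
    ext q
    obtain ⟨z, rfl⟩ := Submodule.Quotient.mk_surjective _ q
    constructor
    · rintro ⟨q', hq'⟩
      obtain ⟨y, rfl⟩ := Submodule.Quotient.mk_surjective _ q'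
      have hq'' : Submodule.Quotient.mk (Z'l y) = (Submodule.Quotient.mk z : H'' ⧸ LinearMap.range Cl) := hq'
      rw [LinearMap.mem_ker, ← hq'']
      show Submodule.Quotient.mk (LinearMap.id (Z'l y)) = 0
      rw [Submodule.Quotient.mk_eq_zero]
      exact ⟨y, rfl⟩
    · intro hlz
      have : Submodule.Quotient.mk (LinearMap.id z) = (0 : H'' ⧸ LinearMap.range Z'l) := hlz
      rw [Submodule.Quotient.mk_eq_zero] at this
      obtain ⟨y, hy⟩ := this
      refine ⟨Submodule.Quotient.mk y, ?_⟩
      show Submodule.Quotient.mk (Z'l y) = Submodule.Quotient.mk z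
      rw [hy]
      rfl
  have hl_surj : Function.Surjective l := by
    intro q
    obtain ⟨z, rfl⟩ := Submodule.Quotient.mk_surjective _ q
    exact ⟨Submodule.Quotient.mk z, rfl⟩
  -- dimension count
  have r1 : Module.finrank ℂ (LinearMap.ker Zl) = Module.finrank ℂ (LinearMap.ker g) := by
    rw [← hfg, LinearMap.finrank_range_of_inj hf_inj]
  have rn_g := LinearMap.finrank_range_add_finrank_ker g
  have rn_h3 := LinearMap.finrank_range_add_finrank_ker h3
  have rn_k := LinearMap.finrank_range_add_finrank_ker k
  have rn_l := LinearMap.finrank_range_add_finrank_ker l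
  have r2 : Module.finrank ℂ (LinearMap.ker h3) = Module.finrank ℂ (LinearMap.range g) := by
    rw [hgh]
  have r3 : Module.finrank ℂ (LinearMap.ker k) = Module.finrank ℂ (LinearMap.range h3) := by
    rw [hhk]
  have r4 : Module.finrank ℂ (LinearMap.ker l) = Module.finrank ℂ (LinearMap.range k) := by
    rw [hkl]
  have r5 : Module.finrank ℂ (LinearMap.range l) =
      Module.finrank ℂ (H'' ⧸ LinearMap.range Z'l) := by
    rw [LinearMap.range_eq_top.mpr hl_surj]
    exact finrank_top ℂ _
  omega
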